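/- Let u and v be coprime positive integers with (u,v) ≠ (1,1). For unit quaternions p and r, the following are equivalent: (i) the bijection q ↦ p q r⁻¹ of the unit quaternions preserves the fibration, i.e., for all unit quaternions q, q', the quaternions q and q' lie in the same orbit of the circle action w · (z₁ + z₂ j) = wᵛ z₁ + wᵘ z₂ j if and only if p q r⁻¹ and p q' r⁻¹ do; (ii) either p and r both lie in the circle subgroup S¹, or p and r both lie in S¹ j. -/

import Mathlib

open Quaternion
open scoped Quaternion

/-- The first complex coordinate of a quaternion `q = z₁ + z₂ j`. -/
def z1 (q : ℍ[ℝ]) : ℂ := ⟨q.re, q.imI⟩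

/-- The second complex coordinate of a quaternion `q = z₁ + z₂ j`. -/
def z2 (q : ℍ[ℝ]) : ℂ := ⟨q.imJ, q.imK⟩

/-- Two quaternions lie in the same orbit of the circle action
`w • (z₁ + z₂ j) = wᵛ z₁ + wᵘ z₂ j`, i.e. in the same fiber of the Seifert fibration
`z₁ + z₂ j ↦ z₁ᵘ / z₂ᵛ` of `S³`. -/
def SameFiber (u v : ℕ) (q q' : ℍ[ℝ]) : Prop :=
  ∃ w : ℂ, ‖w‖ = 1 ∧ z1 q' = w ^ v * z1 q ∧ z2 q' = w ^ u * z2 q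

noncomputable section StmtHelpers

def mk2 (a b : ℂ) : ℍ[ℝ] := ⟨a.re, a.im, b.re, b.im⟩

@[simp] lemma z1_mk2 (a b : ℂ) : z1 (mk2 a b) = a := rfl
@[simp] lemma z2_mk2 (a b : ℂ) : z2 (mk2 a b) = b := rfl

lemma z1_eq_zero {q : ℍ[ℝ]} : z1 q = 0 ↔ q.re = 0 ∧ q.imI = 0 := by
  simp [z1, Complex.ext_iff]

lemma z2_eq_zero {q : ℍ[ℝ]} : z2 q = 0 ↔ q.imJ = 0 ∧ q.imK = 0 := by
  simp [z2, Complex.ext_iff]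

lemma conjC_eq_zero {z : ℂ} : (starRingEnd ℂ) z = 0 ↔ z = 0 := by
  rw [starRingEnd_apply]; exact star_eq_zero

lemma norm_conjC (z : ℂ) : ‖(starRingEnd ℂ) z‖ = ‖z‖ := by
  rw [Complex.norm_conj]

lemma normSq_split (q : ℍ[ℝ]) :
    Quaternion.normSq q = Complex.normSq (z1 q) + Complex.normSq (z2 q) := by
  rw [Quaternion.normSq_def']
  simp [z1, z2, Complex.normSq_apply]
  ring

lemma norm_one_iff (q : ℍ[ℝ]) :
    ‖q‖ = 1 ↔ Complex.normSq (z1 q) + Complex.normSq (z2 q) = 1 := by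
  rw [← normSq_split]
  constructor
  · intro h
    rw [Quaternion.normSq_eq_norm_mul_self, h]; norm_num
  · intro h
    have h2 : ‖q‖ * ‖q‖ = 1 := by rw [← Quaternion.normSq_eq_norm_mul_self, h]
    nlinarith [norm_nonneg q]

lemma norm_mk2 (a b : ℂ) (h : Complex.normSq a + Complex.normSq b = 1) :
    ‖mk2 a b‖ = 1 := by
  rw [norm_one_iff]; simpa using h

lemma normSq_one_of_norm_one {z : ℂ} (h : ‖z‖ = 1) : Complex.normSq z = 1 := by
  rw [Complex.normSq_eq_norm_sq, h]; norm_num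

lemma exists_root (n : ℕ) (hn : 0 < n) (ζ : ℂ) (hζ : ‖ζ‖ = 1) :
    ∃ w : ℂ, ‖w‖ = 1 ∧ w ^ n = ζ := by
  obtain ⟨w, hw⟩ := Complex.isAlgClosed.exists_pow_nat_eq ζ hn
  refine ⟨w, ?_, hw⟩
  have h1 : ‖w‖ ^ n = 1 := by rw [← norm_pow, hw, hζ]
  by_contra h
  rcases lt_or_gt_of_ne h with hlt | hgt
  · have := pow_lt_one₀ (norm_nonneg w) hlt hn.ne'
    rw [h1] at this; exact lt_irrefl 1 this
  · have := one_lt_pow₀ hgt hn.ne'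
    rw [h1] at this; exact lt_irrefl 1 this

lemma exists_bad (m : ℕ) (hm : 0 < m) : ∃ ζ : ℂ, ‖ζ‖ = 1 ∧ ζ ^ m ≠ 1 := by
  refine ⟨Complex.exp ((Real.pi / m : ℝ) * Complex.I), ?_, ?_⟩
  · exact Complex.norm_exp_ofReal_mul_I _
  · rw [← Complex.exp_nat_mul]
    have hm' : (m : ℂ) ≠ 0 := Nat.cast_ne_zero.mpr hm.ne'
    have : (m : ℂ) * ((Real.pi / m : ℝ) * Complex.I) = Real.pi * Complex.I := by
      push_cast
      field_simp
    rw [this, Complex.exp_pi_mul_I]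
    norm_num

lemma pow_ne_pow (m n : ℕ) (h : m ≠ n) : ∃ ζ : ℂ, ‖ζ‖ = 1 ∧ ζ ^ m ≠ ζ ^ n := by
  rcases Nat.lt_or_ge n m with hlt | hge
  · obtain ⟨ζ, h1, h2⟩ := exists_bad (m - n) (by omega)
    refine ⟨ζ, h1, fun hc => h2 ?_⟩
    have hζ : ζ ≠ 0 := by intro h0; rw [h0] at h1; simp at h1
    have h0 : ζ ^ n * ζ ^ (m - n) = ζ ^ n * 1 := by
      rw [mul_one, ← pow_add, Nat.add_sub_cancel' hlt.le, hc]
    exact mul_left_cancel₀ (pow_ne_zero _ hζ) h0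
  · obtain ⟨ζ, h1, h2⟩ := exists_bad (n - m) (by omega)
    refine ⟨ζ, h1, fun hc => h2 ?_⟩
    have hζ : ζ ≠ 0 := by intro h0; rw [h0] at h1; simp at h1
    have h0 : ζ ^ m * ζ ^ (n - m) = ζ ^ m * 1 := by
      rw [mul_one, ← pow_add, Nat.add_sub_cancel' hge, ← hc]
    exact mul_left_cancel₀ (pow_ne_zero _ hζ) h0

lemma pow_pow_eq {w ζ ξ : ℂ} {m n : ℕ} (h1 : w ^ m = ζ) (h2 : w ^ n = ξ) :
    ζ ^ n = ξ ^ m := by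
  rw [← h1, ← h2, ← pow_mul, ← pow_mul, mul_comm]

lemma zero_of_norm_const (x y : ℂ)
    (h : ∀ ζ : ℂ, ‖ζ‖ = 1 → ‖x * ζ + y * (starRingEnd ℂ) ζ‖ = ‖x + y‖) :
    x = 0 ∨ y = 0 := by
  set s : ℝ := Real.sqrt 2 / 2 with hs_def
  have hs : s ^ 2 = 1 / 2 := by
    rw [hs_def, div_pow, Real.sq_sqrt (by norm_num : (2:ℝ) ≥ 0)]
    norm_num
  set c : ℂ := ⟨s, s⟩ with hc_def
  have hcre : c.re = s := rfl
  have hcim : c.im = s := rfl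
  have hcn : ‖c‖ = 1 := by
    have h2 : ‖c‖ ^ 2 = 1 := by
      rw [Complex.sq_norm, Complex.normSq_apply, hcre, hcim]
      nlinarith
    have h3 : (‖c‖ - 1) * (‖c‖ + 1) = 0 := by nlinarith
    rcases mul_eq_zero.mp h3 with h4 | h4
    · linarith
    · nlinarith [norm_nonneg c]
  have hI := h Complex.I (by simp)
  have hS := h c hcn
  have nI : Complex.normSq (x * Complex.I + y * (starRingEnd ℂ) Complex.I)
      = Complex.normSq (x + y) := by
    rw [← Complex.sq_norm, ← Complex.sq_norm, hI]
  have nS : Complex.normSq (x * c + y * (starRingEnd ℂ) c) = Complex.normSq (x + y) := by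
    rw [← Complex.sq_norm, ← Complex.sq_norm, hS]
  simp only [Complex.normSq_apply, Complex.add_re, Complex.add_im, Complex.mul_re,
    Complex.mul_im, Complex.conj_re, Complex.conj_im, Complex.I_re, Complex.I_im,
    hcre, hcim] at nI nS
  have e1 : x.re * y.re + x.im * y.im = 0 := by linear_combination (-1/4 : ℝ) * nI
  have h3 : x.re * y.im - x.im * y.re = 0 := by
    linear_combination (1/2 : ℝ) * nS
      - (1/2 : ℝ) * ((x.re - x.im + y.re + y.im)^2 + (x.re + x.im - y.re + y.im)^2) * hs + e1
  by_cases hx : x = 0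
  · exact Or.inl hx
  · right
    have hpos : 0 < x.re * x.re + x.im * x.im := by
      have := Complex.normSq_pos.mpr hx
      rwa [Complex.normSq_apply] at this
    have hy1 : (x.re * x.re + x.im * x.im) * y.re = 0 := by
      linear_combination x.re * e1 - x.im * h3
    have hy2 : (x.re * x.re + x.im * x.im) * y.im = 0 := by
      linear_combination x.im * e1 + x.re * h3
    apply Complex.ext
    · exact (mul_eq_zero.mp hy1).resolve_left hpos.ne'
    · exact (mul_eq_zero.mp hy2).resolve_left hpos.ne'

lemma z1_mul_star (p q r : ℍ[ℝ]) :
    z1 (p * q * star r) =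
      z1 p * (z1 q * (starRingEnd ℂ) (z1 r) + z2 q * (starRingEnd ℂ) (z2 r))
      - z2 p * ((starRingEnd ℂ) (z2 q) * (starRingEnd ℂ) (z1 r)
          - (starRingEnd ℂ) (z1 q) * (starRingEnd ℂ) (z2 r)) := by
  apply Complex.ext <;>
    simp [z1, z2, Quaternion.re_mul, Quaternion.imI_mul, Complex.ext_iff] <;> ring

lemma z2_mul_star (p q r : ℍ[ℝ]) :
    z2 (p * q * star r) =
      z1 p * (z2 q * z1 r - z1 q * z2 r)
      + z2 p * ((starRingEnd ℂ) (z1 q) * z1 r + (starRingEnd ℂ) (z2 q) * z2 r) := by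
  apply Complex.ext <;>
    simp [z1, z2, Quaternion.re_mul, Quaternion.imI_mul, Quaternion.imJ_mul,
      Quaternion.imK_mul, Complex.ext_iff] <;> ring

lemma inv_eq_star (r : ℍ[ℝ]) (hr : ‖r‖ = 1) : r⁻¹ = star r := by
  have h1 : r * star r = 1 := by
    rw [Quaternion.self_mul_star]
    rw [Quaternion.normSq_eq_norm_mul_self, hr]
    norm_num
  exact inv_eq_of_mul_eq_one_right h1

lemma cancel_left {C η ξ : ℂ} (hC : C ≠ 0) (h : C * η = ξ * C) : η = ξ := by
  apply mul_left_cancel₀ hC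
  rw [h]; ring

end StmtHelpers

/-- Let `u, v` be coprime positive integers with `(u,v) ≠ (1,1)`. For unit quaternions `p`
and `r`, the map `q ↦ p q r⁻¹` preserves the fibration `z₁ + z₂ j ↦ z₁ᵘ / z₂ᵛ` if and only
if `p` and `r` both lie in `S¹`, or both lie in `S¹ j`. -/
theorem stmt8 (u v : ℕ) (hu : 0 < u) (hv : 0 < v) (huv : Nat.Coprime u v)
    (hne : ¬(u = 1 ∧ v = 1)) (p r : ℍ[ℝ]) (hp : ‖p‖ = 1) (hr : ‖r‖ = 1) :
    (∀ q q' : ℍ[ℝ], ‖q‖ = 1 → ‖q'‖ = 1 →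
        (SameFiber u v q q' ↔ SameFiber u v (p * q * r⁻¹) (p * q' * r⁻¹)))
      ↔ ((p.imJ = 0 ∧ p.imK = 0 ∧ r.imJ = 0 ∧ r.imK = 0) ∨
          (p.re = 0 ∧ p.imI = 0 ∧ r.re = 0 ∧ r.imI = 0)) := by
  have hinv : r⁻¹ = star r := inv_eq_star r hr
  have hpn : Complex.normSq (z1 p) + Complex.normSq (z2 p) = 1 := (norm_one_iff p).mp hp
  have hrn : Complex.normSq (z1 r) + Complex.normSq (z2 r) = 1 := (norm_one_iff r).mp hr
  have huvne : u ≠ v := by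
    intro h
    subst h
    have h1 : u = 1 := by
      have := huv
      rwa [Nat.Coprime, Nat.gcd_self] at this
    exact hne ⟨h1, h1⟩
  constructor
  · -- forward direction
    intro H
    have key : ∀ x y x' y' : ℂ, Complex.normSq x + Complex.normSq y = 1 →
        Complex.normSq x' + Complex.normSq y' = 1 →
        SameFiber u v (mk2 x y) (mk2 x' y') →
        ∃ w : ℂ, ‖w‖ = 1 ∧
          (z1 p * (x' * (starRingEnd ℂ) (z1 r) + y' * (starRingEnd ℂ) (z2 r))
              - z2 p * ((starRingEnd ℂ) y' * (starRingEnd ℂ) (z1 r)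
                  - (starRingEnd ℂ) x' * (starRingEnd ℂ) (z2 r))
            = w ^ v * (z1 p * (x * (starRingEnd ℂ) (z1 r) + y * (starRingEnd ℂ) (z2 r))
              - z2 p * ((starRingEnd ℂ) y * (starRingEnd ℂ) (z1 r)
                  - (starRingEnd ℂ) x * (starRingEnd ℂ) (z2 r)))) ∧
          (z1 p * (y' * z1 r - x' * z2 r)
              + z2 p * ((starRingEnd ℂ) x' * z1 r + (starRingEnd ℂ) y' * z2 r)
            = w ^ u * (z1 p * (y * z1 r - x * z2 r)
              + z2 p * ((starRingEnd ℂ) x * z1 r + (starRingEnd ℂ) y * z2 r))) := by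
      intro x y x' y' hxy hxy' hsf
      obtain ⟨w, hw, h1, h2⟩ :=
        (H _ _ (norm_mk2 _ _ hxy) (norm_mk2 _ _ hxy')).mp hsf
      rw [hinv] at h1 h2
      rw [z1_mul_star, z1_mul_star] at h1
      rw [z2_mul_star, z2_mul_star] at h2
      simp only [z1_mk2, z2_mk2] at h1 h2
      exact ⟨w, hw, h1, h2⟩
    have hF0 : ∀ ζ : ℂ, ‖ζ‖ = 1 → ∃ w : ℂ, ‖w‖ = 1 ∧
        z1 p * (starRingEnd ℂ) (z1 r) * ζ
            + z2 p * (starRingEnd ℂ) (z2 r) * (starRingEnd ℂ) ζ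
          = w ^ v * (z1 p * (starRingEnd ℂ) (z1 r) + z2 p * (starRingEnd ℂ) (z2 r)) ∧
        (-(z1 p * z2 r)) * ζ + (z2 p * z1 r) * (starRingEnd ℂ) ζ
          = w ^ u * (-(z1 p * z2 r) + z2 p * z1 r) := by
      intro ζ hζ
      have hnζ : Complex.normSq ζ = 1 := normSq_one_of_norm_one hζ
      obtain ⟨w0, hw0, hw0v⟩ := exists_root v hv ζ hζ
      have hsf : SameFiber u v (mk2 1 0) (mk2 ζ 0) :=
        ⟨w0, hw0, by simp [hw0v], by simp⟩
      obtain ⟨w, hw, h1, h2⟩ := key 1 0 ζ 0 (by simp) (by simp [hnζ]) hsf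
      simp only [map_one, map_zero] at h1 h2
      exact ⟨w, hw, by linear_combination h1, by linear_combination h2⟩
    -- norm constancy gives vanishing products
    have hab : z1 p * (starRingEnd ℂ) (z1 r) = 0 ∨ z2 p * (starRingEnd ℂ) (z2 r) = 0 := by
      apply zero_of_norm_const
      intro ζ hζ
      obtain ⟨w, hw, h1, _⟩ := hF0 ζ hζ
      rw [h1, norm_mul, norm_pow, hw, one_pow, one_mul]
    have hcd : -(z1 p * z2 r) = 0 ∨ z2 p * z1 r = 0 := by
      apply zero_of_norm_const
      intro ζ hζ
      obtain ⟨w, hw, _, h2⟩ := hF0 ζ hζ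
      rw [h2, norm_mul, norm_pow, hw, one_pow, one_mul]
    -- reduce goal to z-coordinates
    suffices hgoal : (z2 p = 0 ∧ z2 r = 0) ∨ (z1 p = 0 ∧ z1 r = 0) by
      rcases hgoal with ⟨h1, h2⟩ | ⟨h1, h2⟩
      · exact Or.inl ⟨(z2_eq_zero.mp h1).1, (z2_eq_zero.mp h1).2,
          (z2_eq_zero.mp h2).1, (z2_eq_zero.mp h2).2⟩
      · exact Or.inr ⟨(z1_eq_zero.mp h1).1, (z1_eq_zero.mp h1).2,
          (z1_eq_zero.mp h2).1, (z1_eq_zero.mp h2).2⟩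
    -- setup for swap-case contradictions
    have huu : u * u ≠ v * v := fun h => huvne (Nat.mul_self_inj.mp h)
    set s : ℝ := Real.sqrt 2 / 2 with hs_def
    have hs : s ^ 2 = 1 / 2 := by
      rw [hs_def, div_pow, Real.sq_sqrt (by norm_num : (2:ℝ) ≥ 0)]
      norm_num
    have hs0 : s ≠ 0 := by
      intro h0
      rw [h0] at hs
      norm_num at hs
    set σ : ℂ := (s : ℂ) with hσ_def
    have hσ0 : σ ≠ 0 := by rw [hσ_def]; exact Complex.ofReal_ne_zero.mpr hs0
    have hσc : (starRingEnd ℂ) σ = σ := by rw [hσ_def]; exact Complex.conj_ofReal s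
    have hσn : Complex.normSq σ + Complex.normSq σ = 1 := by
      rw [hσ_def, Complex.normSq_ofReal]
      nlinarith
    by_cases hP1 : z1 p = 0
    · have hP2 : z2 p ≠ 0 := by
        intro h
        rw [hP1, h] at hpn
        simp at hpn
      by_cases hR2 : z2 r = 0
      · -- swap case A: contradiction
        exfalso
        have hR1 : z1 r ≠ 0 := by
          intro h
          rw [h, hR2] at hrn
          simp at hrn
        obtain ⟨ζ, hζ, hbad⟩ := pow_ne_pow (u * u) (v * v) huu
        have hw₀ : ‖(starRingEnd ℂ) ζ‖ = 1 := by rw [norm_conjC, hζ]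
        have hw₀n : Complex.normSq ((starRingEnd ℂ) ζ) = 1 := normSq_one_of_norm_one hw₀
        have hn2 : Complex.normSq (σ * (starRingEnd ℂ) ζ ^ v)
            + Complex.normSq (σ * (starRingEnd ℂ) ζ ^ u) = 1 := by
          simp only [Complex.normSq_mul, map_pow, hw₀n, one_pow, mul_one]
          exact hσn
        have hsf : SameFiber u v (mk2 σ σ)
            (mk2 (σ * (starRingEnd ℂ) ζ ^ v) (σ * (starRingEnd ℂ) ζ ^ u)) :=
          ⟨(starRingEnd ℂ) ζ, hw₀, by rw [z1_mk2, z1_mk2, mul_comm],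
            by rw [z2_mk2, z2_mk2, mul_comm]⟩
        obtain ⟨w', hw', h1, h2⟩ := key σ σ _ _ hσn hn2 hsf
        simp only [hP1, hR2, map_zero, map_mul, map_pow, Complex.conj_conj,
          hσc, zero_mul, mul_zero, zero_add, add_zero, sub_zero,
          zero_sub, neg_zero] at h1 h2
        have hC : z2 p * σ * (starRingEnd ℂ) (z1 r) ≠ 0 :=
          mul_ne_zero (mul_ne_zero hP2 hσ0) (fun h => hR1 (conjC_eq_zero.mp h))
        have hC2 : z2 p * σ * z1 r ≠ 0 := mul_ne_zero (mul_ne_zero hP2 hσ0) hR1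
        have e1 : ζ ^ u = w' ^ v := cancel_left hC (by linear_combination -h1)
        have e2 : ζ ^ v = w' ^ u := cancel_left hC2 (by linear_combination h2)
        have := pow_pow_eq e1.symm e2.symm
        rw [← pow_mul, ← pow_mul] at this
        exact hbad this
      · by_cases hR1 : z1 r = 0
        · -- conclusion: both in S¹ j
          exact Or.inr ⟨hP1, hR1⟩
        · -- generic r: contradiction
          exfalso
          obtain ⟨ζ, hζ, hbad⟩ := pow_ne_pow u v huvne
          obtain ⟨w, hw, h1, h2⟩ := hF0 ((starRingEnd ℂ) ζ) (by rw [norm_conjC, hζ])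
          simp only [hP1, zero_mul, mul_zero, zero_add, add_zero, sub_zero, neg_zero,
            zero_sub, Complex.conj_conj] at h1 h2
          have hb : z2 p * (starRingEnd ℂ) (z2 r) ≠ 0 :=
            mul_ne_zero hP2 (fun h => hR2 (conjC_eq_zero.mp h))
          have hd : z2 p * z1 r ≠ 0 := mul_ne_zero hP2 hR1
          have e1 : ζ = w ^ v := cancel_left hb (by linear_combination h1)
          have e2 : ζ = w ^ u := cancel_left hd (by linear_combination h2)
          exact hbad (pow_pow_eq e1.symm e2.symm)
    · -- z1 p ≠ 0
      by_cases hP2 : z2 p = 0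
      · by_cases hR1 : z1 r = 0
        · -- swap case B: contradiction
          exfalso
          have hR2 : z2 r ≠ 0 := by
            intro h
            rw [hR1, h] at hrn
            simp at hrn
          obtain ⟨ζ, hζ, hbad⟩ := pow_ne_pow (u * u) (v * v) huu
          have hζn : Complex.normSq ζ = 1 := normSq_one_of_norm_one hζ
          have hn2 : Complex.normSq (σ * ζ ^ v) + Complex.normSq (σ * ζ ^ u) = 1 := by
            simp only [Complex.normSq_mul, map_pow, hζn, one_pow, mul_one]
            exact hσn
          have hsf : SameFiber u v (mk2 σ σ) (mk2 (σ * ζ ^ v) (σ * ζ ^ u)) :=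
            ⟨ζ, hζ, by rw [z1_mk2, z1_mk2, mul_comm], by rw [z2_mk2, z2_mk2, mul_comm]⟩
          obtain ⟨w', hw', h1, h2⟩ := key σ σ _ _ hσn hn2 hsf
          simp only [hP2, hR1, map_zero, map_mul, map_pow, hσc,
            zero_mul, mul_zero, zero_add, add_zero, sub_zero, zero_sub,
            neg_zero] at h1 h2
          have hC : z1 p * σ * (starRingEnd ℂ) (z2 r) ≠ 0 :=
            mul_ne_zero (mul_ne_zero hP1 hσ0) (fun h => hR2 (conjC_eq_zero.mp h))
          have hC2 : z1 p * σ * z2 r ≠ 0 := mul_ne_zero (mul_ne_zero hP1 hσ0) hR2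
          have e1 : ζ ^ u = w' ^ v := cancel_left hC (by linear_combination h1)
          have e2 : ζ ^ v = w' ^ u := cancel_left hC2 (by linear_combination -h2)
          have := pow_pow_eq e1.symm e2.symm
          rw [← pow_mul, ← pow_mul] at this
          exact hbad this
        · by_cases hR2 : z2 r = 0
          · -- conclusion: both in S¹
            exact Or.inl ⟨hP2, hR2⟩
          · -- generic r: contradiction
            exfalso
            obtain ⟨ζ, hζ, hbad⟩ := pow_ne_pow u v huvne
            obtain ⟨w, hw, h1, h2⟩ := hF0 ζ hζ
            simp only [hP2, zero_mul, mul_zero, zero_add, add_zero, sub_zero,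
              neg_zero] at h1 h2
            have ha : z1 p * (starRingEnd ℂ) (z1 r) ≠ 0 :=
              mul_ne_zero hP1 (fun h => hR1 (conjC_eq_zero.mp h))
            have hc : z1 p * z2 r ≠ 0 := mul_ne_zero hP1 hR2
            have e1 : ζ = w ^ v := cancel_left ha (by linear_combination h1)
            have e2 : ζ = w ^ u := cancel_left hc (by linear_combination -h2)
            exact hbad (pow_pow_eq e1.symm e2.symm)
      · -- z1 p ≠ 0 and z2 p ≠ 0 : contradiction
        exfalso
        obtain ⟨ζ0, hζ0, hbad⟩ := exists_bad (u + v) (by omega)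
        have hζ0n : Complex.normSq ζ0 = 1 := normSq_one_of_norm_one hζ0
        have hc1 : (starRingEnd ℂ) ζ0 * ζ0 = 1 := by
          rw [mul_comm, Complex.mul_conj, hζ0n]
          norm_num
        have hR : z1 r = 0 ∨ z2 r = 0 := by
          rcases hab with h | h
          · rcases mul_eq_zero.mp h with h' | h'
            · exact absurd h' hP1
            · exact Or.inl (conjC_eq_zero.mp h')
          · rcases mul_eq_zero.mp h with h' | h'
            · exact absurd h' hP2
            · exact Or.inr (conjC_eq_zero.mp h')
        rcases hR with hR1 | hR2
        · -- z1 r = 0, z2 r ≠ 0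
          have hR2 : z2 r ≠ 0 := by
            intro h
            rw [hR1, h] at hrn
            simp at hrn
          obtain ⟨w, hw, h1, h2⟩ := hF0 ζ0 hζ0
          simp only [hR1, map_zero, zero_mul, mul_zero, zero_add, add_zero,
            sub_zero, neg_zero] at h1 h2
          have hb : z2 p * (starRingEnd ℂ) (z2 r) ≠ 0 :=
            mul_ne_zero hP2 (fun h => hR2 (conjC_eq_zero.mp h))
          have hc : z1 p * z2 r ≠ 0 := mul_ne_zero hP1 hR2
          have e1 : (starRingEnd ℂ) ζ0 = w ^ v := cancel_left hb (by linear_combination h1)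
          have e2 : ζ0 = w ^ u := cancel_left hc (by linear_combination -h2)
          have hkey := pow_pow_eq e1.symm e2.symm
          -- hkey : ((starRingEnd ℂ) ζ0) ^ u = ζ0 ^ v
          apply hbad
          calc ζ0 ^ (u + v) = ζ0 ^ u * ζ0 ^ v := pow_add ζ0 u v
            _ = ζ0 ^ u * ((starRingEnd ℂ) ζ0) ^ u := by rw [hkey]
            _ = (ζ0 * (starRingEnd ℂ) ζ0) ^ u := (mul_pow _ _ _).symm
            _ = 1 := by rw [mul_comm, hc1, one_pow]
        · -- z2 r = 0, z1 r ≠ 0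
          have hR1 : z1 r ≠ 0 := by
            intro h
            rw [h, hR2] at hrn
            simp at hrn
          obtain ⟨w, hw, h1, h2⟩ := hF0 ζ0 hζ0
          simp only [hR2, map_zero, zero_mul, mul_zero, zero_add, add_zero,
            sub_zero, neg_zero] at h1 h2
          have ha : z1 p * (starRingEnd ℂ) (z1 r) ≠ 0 :=
            mul_ne_zero hP1 (fun h => hR1 (conjC_eq_zero.mp h))
          have hd : z2 p * z1 r ≠ 0 := mul_ne_zero hP2 hR1
          have e1 : ζ0 = w ^ v := cancel_left ha (by linear_combination h1)
          have e2 : (starRingEnd ℂ) ζ0 = w ^ u := cancel_left hd (by linear_combination h2)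
          have hkey := pow_pow_eq e1.symm e2.symm
          -- hkey : ζ0 ^ u = ((starRingEnd ℂ) ζ0) ^ v
          apply hbad
          calc ζ0 ^ (u + v) = ζ0 ^ u * ζ0 ^ v := pow_add ζ0 u v
            _ = ((starRingEnd ℂ) ζ0) ^ v * ζ0 ^ v := by rw [hkey]
            _ = ((starRingEnd ℂ) ζ0 * ζ0) ^ v := (mul_pow _ _ _).symm
            _ = 1 := by rw [hc1, one_pow]
  · -- backward direction
    intro hcase q q' hq hq'
    rcases hcase with ⟨h1, h2, h3, h4⟩ | ⟨h1, h2, h3, h4⟩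
    · -- both in S¹
      have hP2 : z2 p = 0 := z2_eq_zero.mpr ⟨h1, h2⟩
      have hR2 : z2 r = 0 := z2_eq_zero.mpr ⟨h3, h4⟩
      have hP1 : z1 p ≠ 0 := by
        intro h
        rw [h, hP2] at hpn
        simp at hpn
      have hR1 : z1 r ≠ 0 := by
        intro h
        rw [h, hR2] at hrn
        simp at hrn
      have f1 : ∀ t : ℍ[ℝ], z1 (p * t * r⁻¹) = z1 p * (starRingEnd ℂ) (z1 r) * z1 t := by
        intro t
        rw [hinv, z1_mul_star, hP2, hR2, map_zero]
        ring
      have f2 : ∀ t : ℍ[ℝ], z2 (p * t * r⁻¹) = z1 p * z1 r * z2 t := by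
        intro t
        rw [hinv, z2_mul_star, hP2, hR2]
        ring
      constructor
      · rintro ⟨w, hw, e1, e2⟩
        exact ⟨w, hw, by rw [f1, f1, e1]; ring, by rw [f2, f2, e2]; ring⟩
      · rintro ⟨w, hw, e1, e2⟩
        rw [f1, f1] at e1
        rw [f2, f2] at e2
        have hc1 : z1 p * (starRingEnd ℂ) (z1 r) ≠ 0 :=
          mul_ne_zero hP1 (fun h => hR1 (conjC_eq_zero.mp h))
        have hc2 : z1 p * z1 r ≠ 0 := mul_ne_zero hP1 hR1
        exact ⟨w, hw, cancel_left hc1 (by linear_combination e1),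
          cancel_left hc2 (by linear_combination e2)⟩
    · -- both in S¹ j
      have hP1 : z1 p = 0 := z1_eq_zero.mpr ⟨h1, h2⟩
      have hR1 : z1 r = 0 := z1_eq_zero.mpr ⟨h3, h4⟩
      have hP2 : z2 p ≠ 0 := by
        intro h
        rw [hP1, h] at hpn
        simp at hpn
      have hR2 : z2 r ≠ 0 := by
        intro h
        rw [hR1, h] at hrn
        simp at hrn
      have g1 : ∀ t : ℍ[ℝ],
          z1 (p * t * r⁻¹) = z2 p * (starRingEnd ℂ) (z2 r) * (starRingEnd ℂ) (z1 t) := by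
        intro t
        rw [hinv, z1_mul_star, hP1, hR1, map_zero]
        ring
      have g2 : ∀ t : ℍ[ℝ],
          z2 (p * t * r⁻¹) = z2 p * z2 r * (starRingEnd ℂ) (z2 t) := by
        intro t
        rw [hinv, z2_mul_star, hP1, hR1]
        ring
      have hc1 : z2 p * (starRingEnd ℂ) (z2 r) ≠ 0 :=
        mul_ne_zero hP2 (fun h => hR2 (conjC_eq_zero.mp h))
      have hc2 : z2 p * z2 r ≠ 0 := mul_ne_zero hP2 hR2
      constructor
      · rintro ⟨w, hw, e1, e2⟩
        refine ⟨(starRingEnd ℂ) w, by rw [norm_conjC, hw], ?_, ?_⟩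
        · rw [g1, g1, e1, map_mul, map_pow]
          ring
        · rw [g2, g2, e2, map_mul, map_pow]
          ring
      · rintro ⟨w, hw, e1, e2⟩
        rw [g1, g1] at e1
        rw [g2, g2] at e2
        have k1 : (starRingEnd ℂ) (z1 q') = w ^ v * (starRingEnd ℂ) (z1 q) :=
          cancel_left hc1 (by linear_combination e1)
        have k2 : (starRingEnd ℂ) (z2 q') = w ^ u * (starRingEnd ℂ) (z2 q) :=
          cancel_left hc2 (by linear_combination e2)
        refine ⟨(starRingEnd ℂ) w, by rw [norm_conjC, hw], ?_, ?_⟩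
        · have := congrArg (starRingEnd ℂ) k1
          simpa [map_mul, map_pow, Complex.conj_conj] using this
        · have := congrArg (starRingEnd ℂ) k2
          simpa [map_mul, map_pow, Complex.conj_conj] using this
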